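/- Let a₃, a₆ be integers with a₃² + 4a₆ ≠ 0, and let p be a prime with p ∤ 3(a₃² + 4a₆). Set A_p = 1 + #{(x,y) ∈ 𝔽_p × 𝔽_p : y² + a₃y = x³ + a₆} and t_p = 1 + p − A_p. Then: (i) if p ≡ 2 (mod 3), t_p = 0; (ii) if p ≡ 1 (mod 3), t_p ≡ Σ_{k=⌊(p−1)/6⌋}^{(p−1)/3} C((p−1)/3 + k, k)·C(k, (p−1)/3 − k) · a₃^{2k−(p−1)/3} a₆^{(p−1)/3 − k} (mod p). In particular, for the curve y² = x³ + a₆ (a₃ = 0, a₆ ≠ 0, p ∤ 6a₆): t_p = 0 if p ≢ 1 (mod 6), and t_p ≡ C((p−1)/2, (p−1)/6) · a₆^{(p−1)/6} (mod p) if p ≡ 1 (mod 6). -/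

import Mathlib

open Finset

lemma sumPowAux (p : ℕ) [Fact p.Prime] (k : ℕ) :
    ∑ x : ZMod p, x ^ k = if k ≠ 0 ∧ (p - 1) ∣ k then -1 else 0 := by
  have hp : p.Prime := Fact.out
  have h2 : 2 ≤ p := hp.two_le
  rcases eq_or_ne k 0 with rfl | hk0
  · simp [Finset.card_univ, ZMod.card, ZMod.natCast_self]
  split_ifs with h
  · obtain ⟨-, hdvd⟩ := h
    have h1 : ∀ x : ZMod p, x ≠ 0 → x ^ k = 1 := by
      intro x hx
      obtain ⟨c, rfl⟩ := hdvd
      rw [pow_mul, ZMod.pow_card_sub_one_eq_one hx, one_pow]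
    have h0 : (0 : ZMod p) ∈ (univ : Finset (ZMod p)) := Finset.mem_univ _
    rw [← Finset.sum_erase_add _ _ h0, zero_pow hk0, add_zero,
      Finset.sum_congr rfl (fun x hx => h1 x (Finset.ne_of_mem_erase hx)),
      Finset.sum_const, Finset.card_erase_of_mem h0, Finset.card_univ, ZMod.card,
      nsmul_eq_mul, mul_one]
    have : ((p - 1 : ℕ) : ZMod p) = (p : ZMod p) - 1 := by
      push_cast [Nat.cast_sub hp.one_le]; ring
    rw [this, ZMod.natCast_self, zero_sub]
  · push_neg at h
    have hnd := h hk0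
    set r := k % (p - 1) with hr
    have hrne : r ≠ 0 := fun h0 => hnd (Nat.dvd_of_mod_eq_zero h0)
    have hrlt : r < p - 1 := Nat.mod_lt _ (by omega)
    have : ∀ x : ZMod p, x ^ k = x ^ r := by
      intro x
      rcases eq_or_ne x 0 with rfl | hx
      · rw [zero_pow hk0, zero_pow hrne]
      · conv_lhs => rw [← Nat.div_add_mod k (p - 1)]
        rw [pow_add, pow_mul, ZMod.pow_card_sub_one_eq_one hx, one_pow, one_mul]
    rw [Finset.sum_congr rfl fun x _ => this x]
    have := FiniteField.sum_pow_lt_card_sub_one (ZMod p) r (by rwa [ZMod.card])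
    exact this

lemma chooseCongr (p : ℕ) [Fact p.Prime] (a b : ℕ) (h : a + b ≤ p - 1) :
    ((p - 1 - a).choose b : ZMod p) = (-1) ^ b * (((a + b).choose b : ℕ) : ZMod p) := by
  have hp : p.Prime := Fact.out
  have h2 : 2 ≤ p := hp.two_le
  have hfac : ((Nat.factorial b : ℕ) : ZMod p) ≠ 0 := by
    rw [Ne, ZMod.natCast_eq_zero_iff]
    intro hd
    have := (Nat.Prime.dvd_factorial hp).mp hd
    omega
  apply mul_left_cancel₀ hfac
  rw [mul_left_comm, ← Nat.cast_mul, ← Nat.cast_mul,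
    ← Nat.descFactorial_eq_factorial_mul_choose, ← Nat.descFactorial_eq_factorial_mul_choose,
    Nat.descFactorial_eq_prod_range, Nat.descFactorial_eq_prod_range,
    Nat.cast_prod, Nat.cast_prod]
  have step1 : ∏ i ∈ Finset.range b, ((p - 1 - a - i : ℕ) : ZMod p)
      = (-1 : ZMod p) ^ b * ∏ i ∈ Finset.range b, ((a + 1 + i : ℕ) : ZMod p) := by
    have hc : ((-1 : ZMod p)) ^ b = ∏ _i ∈ Finset.range b, (-1 : ZMod p) := by
      rw [Finset.prod_const, Finset.card_range]
    rw [hc, ← Finset.prod_mul_distrib]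
    refine Finset.prod_congr rfl fun i hi => ?_
    rw [Finset.mem_range] at hi
    have hq : ((p - 1 - a - i) + (a + 1 + i) : ℕ) = p := by omega
    have h0 : ((p - 1 - a - i : ℕ) : ZMod p) + ((a + 1 + i : ℕ) : ZMod p) = 0 := by
      rw [← Nat.cast_add, hq, ZMod.natCast_self]
    rw [neg_one_mul]
    exact eq_neg_of_add_eq_zero_left h0
  have step2 : ∏ i ∈ Finset.range b, ((a + b - i : ℕ) : ZMod p)
      = ∏ i ∈ Finset.range b, ((a + 1 + i : ℕ) : ZMod p) := by
    rw [← Finset.prod_range_reflect (fun i => ((a + 1 + i : ℕ) : ZMod p)) b]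
    refine Finset.prod_congr rfl fun j hj => ?_
    rw [Finset.mem_range] at hj
    congr 1
    omega
  rw [step1, step2]

lemma cardEq (p : ℕ) [Fact p.Prime] (A B : ZMod p) :
    ((Nat.card {P : ZMod p × ZMod p // P.2 ^ 2 + A * P.2 = P.1 ^ 3 + B} : ℕ) : ZMod p)
      = - ∑ z : ZMod p × ZMod p, (z.2 ^ 2 + A * z.2 - z.1 ^ 3 - B) ^ (p - 1) := by
  classical
  have hp : p.Prime := Fact.out
  have hp1 : p - 1 ≠ 0 := by have := hp.two_le; omega
  rw [Nat.card_eq_fintype_card, Fintype.card_subtype]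
  have key : ∀ z : ZMod p × ZMod p,
      (if z.2 ^ 2 + A * z.2 = z.1 ^ 3 + B then (1 : ZMod p) else 0)
        = 1 - (z.2 ^ 2 + A * z.2 - z.1 ^ 3 - B) ^ (p - 1) := by
    intro z
    split_ifs with hz
    · rw [show z.2 ^ 2 + A * z.2 - z.1 ^ 3 - B = 0 by linear_combination hz, zero_pow hp1]
      ring
    · rw [ZMod.pow_card_sub_one_eq_one (fun h0 => hz (by linear_combination h0))]
      ring
  rw [← Finset.sum_boole, Finset.sum_congr rfl fun z _ => key z, Finset.sum_sub_distrib,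
    Finset.sum_const, Finset.card_univ, Fintype.card_prod, ZMod.card]
  simp [ZMod.natCast_self]

lemma cubeBij (p : ℕ) [Fact p.Prime] (h : p % 3 = 2) :
    Function.Bijective (fun x : ZMod p => x ^ 3) := by
  have hp : p.Prime := Fact.out
  have h2 : 2 ≤ p := hp.two_le
  have hinj : Function.Injective (fun x : ZMod p => x ^ 3) := by
    intro x y hxy
    simp only at hxy
    rcases eq_or_ne y 0 with rfl | hy
    · rw [zero_pow (by norm_num : (3 : ℕ) ≠ 0)] at hxy
      exact (pow_eq_zero_iff (by norm_num : (3 : ℕ) ≠ 0)).mp hxy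
    · have hx : x ≠ 0 := by
        intro h0
        rw [h0, zero_pow (by norm_num : (3 : ℕ) ≠ 0)] at hxy
        exact hy ((pow_eq_zero_iff (by norm_num : (3 : ℕ) ≠ 0)).mp hxy.symm)
      have hu : x / y ≠ 0 := div_ne_zero hx hy
      have hxy3 : (x / y) ^ 3 = 1 := by
        rw [div_pow, hxy, div_self (pow_ne_zero 3 hy)]
      have hd1 : orderOf (x / y) ∣ 3 := orderOf_dvd_of_pow_eq_one hxy3
      have hd2 : orderOf (x / y) ∣ p - 1 :=
        orderOf_dvd_of_pow_eq_one (ZMod.pow_card_sub_one_eq_one hu)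
      have hg : Nat.gcd 3 (p - 1) = 1 := by
        have h31 : (p - 1) % 3 = 1 := by omega
        rw [Nat.gcd_rec, h31, Nat.gcd_one_left]
      have hone := Nat.dvd_gcd hd1 hd2
      rw [hg, Nat.dvd_one] at hone
      have := orderOf_eq_one_iff.mp hone
      rwa [div_eq_one_iff_eq (hy)] at this
  exact Finite.injective_iff_bijective.mp hinj

lemma cardEq2 (p : ℕ) [Fact p.Prime] (h : p % 3 = 2) (A B : ZMod p) :
    Nat.card {P : ZMod p × ZMod p // P.2 ^ 2 + A * P.2 = P.1 ^ 3 + B} = p := by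
  let e : ZMod p ≃ ZMod p := Equiv.ofBijective _ (cubeBij p h)
  have he : ∀ x : ZMod p, e x = x ^ 3 := fun x => rfl
  have e2 : {P : ZMod p × ZMod p // P.2 ^ 2 + A * P.2 = P.1 ^ 3 + B} ≃ ZMod p :=
    { toFun := fun P => P.1.2
      invFun := fun y => ⟨(e.symm (y ^ 2 + A * y - B), y), by
        have h3 : (e.symm (y ^ 2 + A * y - B)) ^ 3 = y ^ 2 + A * y - B := by
          rw [← he]; exact e.apply_symm_apply _
        linear_combination -h3⟩
      left_inv := fun P => by
        obtain ⟨⟨x, y⟩, hP⟩ := P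
        simp only [Subtype.mk.injEq, Prod.mk.injEq]
        constructor
        · rw [Equiv.symm_apply_eq, he]
          linear_combination hP
        · trivial
      right_inv := fun y => rfl }
  rw [Nat.card_congr e2]
  simp [Nat.card_eq_fintype_card, ZMod.card]

lemma gSum (p : ℕ) [Fact p.Prime] (A B : ZMod p) (e : ℕ) :
    ∑ y : ZMod p, (y ^ 2 + A * y - B) ^ e
      = ∑ i ∈ Finset.range (e + 1), ∑ l ∈ Finset.range (i + 1),
          ((e.choose i * i.choose l : ℕ) : ZMod p) * (-B) ^ (e - i) * A ^ (i - l)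
            * (if i + l ≠ 0 ∧ (p - 1) ∣ (i + l) then -1 else 0) := by
  have expand : ∀ y : ZMod p, (y ^ 2 + A * y - B) ^ e
      = ∑ i ∈ Finset.range (e + 1), ∑ l ∈ Finset.range (i + 1),
          ((e.choose i * i.choose l : ℕ) : ZMod p) * (-B) ^ (e - i) * A ^ (i - l) * y ^ (i + l) := by
    intro y
    rw [show y ^ 2 + A * y - B = (y ^ 2 + A * y) + (-B) by ring, add_pow]
    refine Finset.sum_congr rfl fun i hi => ?_
    rw [show y ^ 2 + A * y = y * (y + A) by ring, mul_pow, add_pow, Finset.mul_sum,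
      Finset.sum_mul, Finset.sum_mul]
    refine Finset.sum_congr rfl fun l hl => ?_
    push_cast
    ring
  rw [Finset.sum_congr rfl fun y (_ : y ∈ Finset.univ) => expand y, Finset.sum_comm]
  refine Finset.sum_congr rfl fun i _ => ?_
  rw [Finset.sum_comm]
  refine Finset.sum_congr rfl fun l _ => ?_
  rw [← Finset.mul_sum, sumPowAux]

lemma partII (p : ℕ) [Fact p.Prime] (h1 : p % 3 = 1) (A B : ZMod p) :
    ∑ z : ZMod p × ZMod p, (z.2 ^ 2 + A * z.2 - z.1 ^ 3 - B) ^ (p - 1)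
      = ∑ k ∈ Finset.Icc ((p - 1) / 6) ((p - 1) / 3),
          ((((p - 1) / 3 + k).choose k * k.choose ((p - 1) / 3 - k) : ℕ) : ZMod p)
            * A ^ (2 * k - (p - 1) / 3) * B ^ ((p - 1) / 3 - k) := by
  have hp : p.Prime := Fact.out
  have hp2 := hp.two_le
  have hp7 : 7 ≤ p := by
    by_contra hlt
    push_neg at hlt
    interval_cases p <;> first | omega | norm_num at hp
  set m := (p - 1) / 3 with hm
  have h3m : p - 1 = 3 * m := by omega
  have hm2 : 2 ≤ m := by omega
  -- Step 1 : expand the double sum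
  have hS : ∑ z : ZMod p × ZMod p, (z.2 ^ 2 + A * z.2 - z.1 ^ 3 - B) ^ (p - 1)
      = ∑ j ∈ Finset.range p, ((p - 1).choose j : ZMod p) * (-1) ^ j
          * ((∑ x : ZMod p, x ^ (3 * j)) * (∑ y : ZMod p, (y ^ 2 + A * y - B) ^ (p - 1 - j))) := by
    rw [Fintype.sum_prod_type]
    have e1 : ∀ x y : ZMod p, (y ^ 2 + A * y - x ^ 3 - B) ^ (p - 1)
        = ∑ j ∈ Finset.range p, ((p - 1).choose j : ZMod p) * (-1) ^ j
            * (x ^ (3 * j) * (y ^ 2 + A * y - B) ^ (p - 1 - j)) := by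
      intro x y
      rw [show y ^ 2 + A * y - x ^ 3 - B = (-(x ^ 3)) + (y ^ 2 + A * y - B) by ring, add_pow,
        show p - 1 + 1 = p by omega]
      refine Finset.sum_congr rfl fun j hj => ?_
      rw [neg_pow, ← pow_mul]
      ring
    calc ∑ x : ZMod p, ∑ y : ZMod p, ((x, y).2 ^ 2 + A * (x, y).2 - (x, y).1 ^ 3 - B) ^ (p - 1)
        = ∑ x : ZMod p, ∑ y : ZMod p, ∑ j ∈ Finset.range p,
            ((p - 1).choose j : ZMod p) * (-1) ^ j
              * (x ^ (3 * j) * (y ^ 2 + A * y - B) ^ (p - 1 - j)) := by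
          exact Finset.sum_congr rfl fun x _ => Finset.sum_congr rfl fun y _ => e1 x y
      _ = ∑ j ∈ Finset.range p, ∑ x : ZMod p, ∑ y : ZMod p,
            ((p - 1).choose j : ZMod p) * (-1) ^ j
              * (x ^ (3 * j) * (y ^ 2 + A * y - B) ^ (p - 1 - j)) := by
          refine Eq.trans (Finset.sum_congr rfl fun x _ => Finset.sum_comm) ?_
          exact Finset.sum_comm
      _ = ∑ j ∈ Finset.range p, ((p - 1).choose j : ZMod p) * (-1) ^ j
            * ((∑ x : ZMod p, x ^ (3 * j)) * (∑ y : ZMod p, (y ^ 2 + A * y - B) ^ (p - 1 - j))) := by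
          refine Finset.sum_congr rfl fun j _ => ?_
          rw [Finset.sum_mul_sum]
          simp only [Finset.mul_sum]
  -- Step 2 : evaluate the x-sums
  have hxsum : ∀ j : ℕ, (∑ x : ZMod p, x ^ (3 * j)) = if j ≠ 0 ∧ m ∣ j then -1 else 0 := by
    intro j
    rw [sumPowAux]
    have h31 : (3 * j ≠ 0) ↔ (j ≠ 0) := by omega
    have h32 : ((p - 1) ∣ 3 * j) ↔ (m ∣ j) := by
      rw [h3m]
      exact Nat.mul_dvd_mul_iff_left (by norm_num : 0 < 3)
    rw [if_congr (and_congr h31 h32) rfl rfl]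
  have hfilter : Finset.filter (fun j => j ≠ 0 ∧ m ∣ j) (Finset.range p) =
      ({m, 2 * m, 3 * m} : Finset ℕ) := by
    ext j
    simp only [Finset.mem_filter, Finset.mem_range, Finset.mem_insert, Finset.mem_singleton]
    constructor
    · rintro ⟨hj, hj0, t, rfl⟩
      have ht : t ≤ 3 := by
        by_contra hgt
        push_neg at hgt
        have h4 : m * 4 ≤ m * t := Nat.mul_le_mul_left m (by omega)
        have hp3 : p = 3 * m + 1 := by omega
        linarith
      interval_cases t <;> omega
    · rintro (rfl | rfl | rfl)
      · exact ⟨by omega, by omega, ⟨1, by ring⟩⟩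
      · exact ⟨by omega, by omega, ⟨2, by ring⟩⟩
      · exact ⟨by omega, by omega, ⟨3, by ring⟩⟩
  have collapse : ∑ z : ZMod p × ZMod p, (z.2 ^ 2 + A * z.2 - z.1 ^ 3 - B) ^ (p - 1)
      = - (((p - 1).choose m : ZMod p) * (-1) ^ m
            * ∑ y : ZMod p, (y ^ 2 + A * y - B) ^ (2 * m))
        - (((p - 1).choose (2 * m) : ZMod p) * (-1) ^ (2 * m)
            * ∑ y : ZMod p, (y ^ 2 + A * y - B) ^ m)
        - (((p - 1).choose (3 * m) : ZMod p) * (-1) ^ (3 * m)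
            * ∑ y : ZMod p, (y ^ 2 + A * y - B) ^ 0) := by
    rw [hS]
    have : ∀ j ∈ Finset.range p, ((p - 1).choose j : ZMod p) * (-1) ^ j
        * ((∑ x : ZMod p, x ^ (3 * j)) * (∑ y : ZMod p, (y ^ 2 + A * y - B) ^ (p - 1 - j)))
        = if j ≠ 0 ∧ m ∣ j then
            (((p - 1).choose j : ZMod p) * (-1) ^ j
              * (-(∑ y : ZMod p, (y ^ 2 + A * y - B) ^ (p - 1 - j)))) else 0 := by
      intro j _
      rw [hxsum j]
      split_ifs <;> ring
    rw [Finset.sum_congr rfl this, ← Finset.sum_filter, hfilter]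
    have hne1 : m ∉ ({2 * m, 3 * m} : Finset ℕ) := by
      simp only [Finset.mem_insert, Finset.mem_singleton]; omega
    have hne2 : (2 * m) ∉ ({3 * m} : Finset ℕ) := by
      simp only [Finset.mem_singleton]; omega
    rw [Finset.sum_insert hne1, Finset.sum_insert hne2, Finset.sum_singleton,
      show p - 1 - m = 2 * m by omega, show p - 1 - 2 * m = m by omega,
      show p - 1 - 3 * m = 0 by omega]
    ring
  -- Step 3 : the y-sums for exponents 0 and m vanish
  have hy0 : ∑ y : ZMod p, (y ^ 2 + A * y - B) ^ 0 = 0 := by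
    rw [gSum]
    simp
  have hym : ∑ y : ZMod p, (y ^ 2 + A * y - B) ^ m = 0 := by
    rw [gSum]
    refine Finset.sum_eq_zero fun i hi => Finset.sum_eq_zero fun l hl => ?_
    rw [Finset.mem_range] at hi hl
    rw [if_neg, mul_zero]
    rintro ⟨hne, hdvd⟩
    have := Nat.le_of_dvd (by omega) hdvd
    omega
  -- Step 4 : the y-sum for exponent 2m
  have hy2m : ∑ y : ZMod p, (y ^ 2 + A * y - B) ^ (2 * m)
      = ∑ k ∈ Finset.Icc (m / 2) m,
          (if 3 * m - (m + k) ≤ m + k then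
            -((((2 * m).choose (m + k) * (m + k).choose (3 * m - (m + k)) : ℕ) : ZMod p)
               * (-B) ^ (2 * m - (m + k)) * A ^ ((m + k) - (3 * m - (m + k)))) else 0) := by
    rw [gSum]
    have inner : ∀ i ∈ Finset.range (2 * m + 1),
        (∑ l ∈ Finset.range (i + 1),
          (((2 * m).choose i * i.choose l : ℕ) : ZMod p) * (-B) ^ (2 * m - i) * A ^ (i - l)
            * (if i + l ≠ 0 ∧ (p - 1) ∣ (i + l) then -1 else 0))
        = if 3 * m - i ≤ i then
            -((((2 * m).choose i * i.choose (3 * m - i) : ℕ) : ZMod p)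
               * (-B) ^ (2 * m - i) * A ^ (i - (3 * m - i))) else 0 := by
      intro i hi
      rw [Finset.mem_range] at hi
      have congr1 : ∀ l ∈ Finset.range (i + 1),
          (((2 * m).choose i * i.choose l : ℕ) : ZMod p) * (-B) ^ (2 * m - i) * A ^ (i - l)
            * (if i + l ≠ 0 ∧ (p - 1) ∣ (i + l) then -1 else 0)
          = if l = 3 * m - i then
              -((((2 * m).choose i * i.choose l : ℕ) : ZMod p)
                 * (-B) ^ (2 * m - i) * A ^ (i - l)) else 0 := by
        intro l hl
        rw [Finset.mem_range] at hl
        have hiff : (i + l ≠ 0 ∧ (p - 1) ∣ (i + l)) ↔ (l = 3 * m - i) := by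
          rw [h3m]
          constructor
          · rintro ⟨hne, hdvd⟩
            have hle := Nat.le_of_dvd (by omega) hdvd
            have hd2 : 3 * m ∣ (i + l - 3 * m) := Nat.dvd_sub hdvd dvd_rfl
            rcases eq_or_ne (i + l - 3 * m) 0 with h0 | h0
            · omega
            · have := Nat.le_of_dvd (Nat.pos_of_ne_zero h0) hd2
              omega
          · intro hleq
            refine ⟨by omega, ?_⟩
            rw [show i + l = 3 * m by omega]
        rw [if_congr hiff rfl rfl]
        split_ifs with hcase
        · ring
        · ring
      rw [Finset.sum_congr rfl congr1, Finset.sum_ite_eq' (Finset.range (i + 1)) (3 * m - i)]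
      rw [if_congr (by rw [Finset.mem_range]; omega : (3 * m - i ∈ Finset.range (i + 1)) ↔ (3 * m - i ≤ i)) rfl rfl]
    rw [Finset.sum_congr rfl inner]
    have sub1 : ∑ i ∈ Finset.range (2 * m + 1),
        (if 3 * m - i ≤ i then
            -((((2 * m).choose i * i.choose (3 * m - i) : ℕ) : ZMod p)
               * (-B) ^ (2 * m - i) * A ^ (i - (3 * m - i))) else 0)
        = ∑ i ∈ Finset.Icc (m + m / 2) (2 * m),
            (if 3 * m - i ≤ i then
              -((((2 * m).choose i * i.choose (3 * m - i) : ℕ) : ZMod p)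
                 * (-B) ^ (2 * m - i) * A ^ (i - (3 * m - i))) else 0) := by
      symm
      apply Finset.sum_subset
      · intro i hi
        rw [Finset.mem_Icc] at hi
        rw [Finset.mem_range]
        omega
      · intro i hir hni
        rw [Finset.mem_range] at hir
        rw [Finset.mem_Icc] at hni
        rw [if_neg]
        omega
    rw [sub1, show Finset.Icc (m + m / 2) (2 * m) = Finset.Icc (m + m / 2) (m + m) by rw [two_mul],
      ← Finset.map_add_left_Icc, Finset.sum_map]
    rfl
  -- Step 5 : assemble
  have hc1 : (((p - 1).choose m : ℕ) : ZMod p) = (-1) ^ m := by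
    have := chooseCongr p 0 m (by omega)
    simpa using this
  have h6 : (p - 1) / 6 = m / 2 := by omega
  rw [collapse, hym, hy0, hy2m, hc1, h6]
  simp only [mul_zero, sub_zero]
  rw [Finset.mul_sum, ← Finset.sum_neg_distrib]
  refine Finset.sum_congr rfl fun k hk => ?_
  rw [Finset.mem_Icc] at hk
  by_cases hcase : m ≤ 2 * k
  · rw [if_pos (by omega : 3 * m - (m + k) ≤ m + k)]
    rw [show 3 * m - (m + k) = 2 * m - k by omega, show 2 * m - (m + k) = m - k by omega,
      show (m + k) - (2 * m - k) = 2 * k - m by omega]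
    have hc2 : (((2 * m).choose (m + k) : ℕ) : ZMod p)
        = (-1) ^ (m - k) * (((2 * m - k).choose (m - k) : ℕ) : ZMod p) := by
      have hsymm : (2 * m).choose (m + k) = (2 * m).choose (m - k) := by
        rw [show m - k = 2 * m - (m + k) by omega]
        exact (Nat.choose_symm (by omega)).symm
      have hcc := chooseCongr p m (m - k) (by omega)
      rw [show p - 1 - m = 2 * m by omega, show m + (m - k) = 2 * m - k by omega] at hcc
      rw [hsymm, hcc]
    have hid : (m + k).choose (2 * m - k) * (2 * m - k).choose (m - k)
        = (m + k).choose k * k.choose (m - k) := by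
      rw [Nat.choose_mul (n := m + k) (show m - k ≤ 2 * m - k by omega),
        Nat.choose_mul (n := m + k) (show m - k ≤ k by omega),
        show (m + k) - (m - k) = 2 * k by omega, show (2 * m - k) - (m - k) = m by omega,
        show k - (m - k) = 2 * k - m by omega]
      congr 1
      rw [← Nat.choose_symm (show 2 * k - m ≤ 2 * k by omega),
        show 2 * k - (2 * k - m) = m by omega]
    have hsq : ∀ n : ℕ, ((-1 : ZMod p)) ^ n * (-1) ^ n = 1 := by
      intro n
      rw [← mul_pow]
      norm_num
    push_cast at hc2 ⊢
    calc -((-1 : ZMod p) ^ m * (-1) ^ m *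
            -(((2 * m).choose (m + k) : ZMod p) * ((m + k).choose (2 * m - k) : ZMod p)
               * (-B) ^ (m - k) * A ^ (2 * k - m)))
        = ((-1 : ZMod p) ^ m * (-1) ^ m) *
            (((2 * m).choose (m + k) : ZMod p) * ((m + k).choose (2 * m - k) : ZMod p)
               * ((-1) ^ (m - k) * B ^ (m - k)) * A ^ (2 * k - m)) := by
          rw [neg_pow B]
          ring
      _ = ((m + k).choose k : ZMod p) * (k.choose (m - k) : ZMod p)
            * A ^ (2 * k - m) * B ^ (m - k) := by
          rw [hsq, hc2]
          have : (((m + k).choose (2 * m - k) * (2 * m - k).choose (m - k) : ℕ) : ZMod p)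
              = (((m + k).choose k * k.choose (m - k) : ℕ) : ZMod p) := by rw [hid]
          push_cast at this
          calc (1 : ZMod p) * ((-1) ^ (m - k) * ((2 * m - k).choose (m - k) : ZMod p)
                  * ((m + k).choose (2 * m - k) : ZMod p)
                  * ((-1) ^ (m - k) * B ^ (m - k)) * A ^ (2 * k - m))
              = ((-1 : ZMod p) ^ (m - k) * (-1) ^ (m - k)) *
                  (((m + k).choose (2 * m - k) : ZMod p) * ((2 * m - k).choose (m - k) : ZMod p)
                    * A ^ (2 * k - m) * B ^ (m - k)) := by ring
            _ = ((m + k).choose k : ZMod p) * (k.choose (m - k) : ZMod p)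
                  * A ^ (2 * k - m) * B ^ (m - k) := by rw [hsq, one_mul, this]
  · rw [if_neg (by omega : ¬ (3 * m - (m + k) ≤ m + k)),
      Nat.choose_eq_zero_of_lt (show k < m - k by omega)]
    push_cast
    ring

theorem stmt18 (a₃ a₆ : ℤ) (hΔ : a₃ ^ 2 + 4 * a₆ ≠ 0)
    (p : ℕ) (hp : p.Prime) (hpΔ : ¬ ((p : ℤ) ∣ 3 * (a₃ ^ 2 + 4 * a₆)))
    (Ap : ℕ)
    (hAp : Ap = 1 + Nat.card {P : ZMod p × ZMod p //
      P.2 ^ 2 + (a₃ : ZMod p) * P.2 = P.1 ^ 3 + (a₆ : ZMod p)})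
    (tp : ℤ) (htp : tp = 1 + (p : ℤ) - (Ap : ℤ)) :
    -- (i)
    (p % 3 = 2 → tp = 0) ∧
    -- (ii)
    (p % 3 = 1 →
      tp ≡ ∑ k ∈ Finset.Icc ((p - 1) / 6) ((p - 1) / 3),
        (((p - 1) / 3 + k).choose k * k.choose ((p - 1) / 3 - k) : ℤ) *
          a₃ ^ (2 * k - (p - 1) / 3) * a₆ ^ ((p - 1) / 3 - k) [ZMOD p]) ∧
    -- in particular, for y² = x³ + a₆ :
    (a₃ = 0 → ¬ ((p : ℤ) ∣ 6 * a₆) →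
      (p % 6 ≠ 1 → tp = 0) ∧
      (p % 6 = 1 →
        tp ≡ (((p - 1) / 2).choose ((p - 1) / 6) : ℤ) * a₆ ^ ((p - 1) / 6) [ZMOD p])) := by
  have hpI : Fact p.Prime := ⟨hp⟩
  have part1 : p % 3 = 2 → tp = 0 := by
    intro h2
    rw [htp, hAp, cardEq2 p h2 (a₃ : ZMod p) (a₆ : ZMod p)]
    push_cast
    ring
  have part2 : p % 3 = 1 →
      tp ≡ ∑ k ∈ Finset.Icc ((p - 1) / 6) ((p - 1) / 3),
        (((p - 1) / 3 + k).choose k * k.choose ((p - 1) / 3 - k) : ℤ) *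
          a₃ ^ (2 * k - (p - 1) / 3) * a₆ ^ ((p - 1) / 3 - k) [ZMOD p] := by
    intro h1
    rw [← ZMod.intCast_eq_intCast_iff]
    have htpz : ((tp : ℤ) : ZMod p)
        = ∑ z : ZMod p × ZMod p,
            (z.2 ^ 2 + (a₃ : ZMod p) * z.2 - z.1 ^ 3 - (a₆ : ZMod p)) ^ (p - 1) := by
      rw [htp, hAp]
      push_cast
      rw [cardEq p (a₃ : ZMod p) (a₆ : ZMod p), ZMod.natCast_self]
      ring
    rw [htpz, partII p h1 (a₃ : ZMod p) (a₆ : ZMod p)]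
    push_cast
    refine Finset.sum_congr rfl fun k hk => ?_
    ring
  refine ⟨part1, part2, ?_⟩
  intro ha3 h6
  have hp2 : p ≠ 2 := by
    rintro rfl
    exact h6 ⟨3 * a₆, by ring⟩
  have hp3 : p ≠ 3 := by
    rintro rfl
    exact h6 ⟨2 * a₆, by ring⟩
  have hpodd : p % 2 = 1 := by
    rcases Nat.mod_two_eq_zero_or_one p with h0 | h1
    · exact absurd ((Nat.prime_dvd_prime_iff_eq Nat.prime_two hp).mp
        (Nat.dvd_of_mod_eq_zero h0)).symm hp2
    · exact h1
  have hm3 : p % 3 ≠ 0 := by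
    intro h0
    exact hp3 ((Nat.prime_dvd_prime_iff_eq Nat.prime_three hp).mp
      (Nat.dvd_of_mod_eq_zero h0)).symm
  constructor
  · intro h61
    exact part1 (by omega)
  · intro h61
    have h31 : p % 3 = 1 := by omega
    have hcong := part2 h31
    have hsum : (∑ k ∈ Finset.Icc ((p - 1) / 6) ((p - 1) / 3),
        (((p - 1) / 3 + k).choose k * k.choose ((p - 1) / 3 - k) : ℤ) *
          a₃ ^ (2 * k - (p - 1) / 3) * a₆ ^ ((p - 1) / 3 - k))
        = (((p - 1) / 2).choose ((p - 1) / 6) : ℤ) * a₆ ^ ((p - 1) / 6) := by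
      subst ha3
      rw [Finset.sum_eq_single ((p - 1) / 6)]
      · rw [show 2 * ((p - 1) / 6) - (p - 1) / 3 = 0 by omega,
          show (p - 1) / 3 - (p - 1) / 6 = (p - 1) / 6 by omega,
          show (p - 1) / 3 + (p - 1) / 6 = (p - 1) / 2 by omega,
          Nat.choose_self]
        push_cast
        ring
      · intro k hk hne
        rw [Finset.mem_Icc] at hk
        rw [zero_pow (show 2 * k - (p - 1) / 3 ≠ 0 by omega)]
        ring
      · intro habs
        exact absurd (Finset.mem_Icc.mpr ⟨le_rfl, by omega⟩) habs
    rwa [hsum] at hcong
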